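/- arXiv:1502.05679 — 6 statements merged into one kernel-verified Lean document; each statement's English description precedes it below -/
import Mathlib

section
/- Let P₄(X) = X + X² + (4/5)X³ + (2/5)X⁴. For real numbers a, b, t with 0 < a ≤ b, one has Re{P₄(a/(b+it))} = (16/5)·(ab)⁴/(b²+t²)⁴ + a(b−a)·Q(a,b,t)/(5(b²+t²)³), where Q(a,b,t) = 5t⁴ + 2(5b² + 5ab − a²)t² + b²(5b² + 10ab + 14a²). -/
open Complex

set_option maxHeartbeats 1000000 in
/-- Real-part identity for P₄(a/(b+it)) when 0 < a ≤ b. -/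
theorem reP4_identity (a b t : ℝ) (ha : 0 < a) (hab : a ≤ b) :
    (((a : ℂ) / (b + t * I)) + ((a : ℂ) / (b + t * I)) ^ 2
        + (4 / 5) * ((a : ℂ) / (b + t * I)) ^ 3
        + (2 / 5) * ((a : ℂ) / (b + t * I)) ^ 4).re
      = (16 / 5) * (a * b) ^ 4 / (b ^ 2 + t ^ 2) ^ 4
        + a * (b - a)
            * (5 * t ^ 4 + 2 * (5 * b ^ 2 + 5 * a * b - a ^ 2) * t ^ 2
                + b ^ 2 * (5 * b ^ 2 + 10 * a * b + 14 * a ^ 2))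
            / (5 * (b ^ 2 + t ^ 2) ^ 3) := by
  have hb : 0 < b := lt_of_lt_of_le ha hab
  have hd : (b ^ 2 + t ^ 2) ≠ 0 := by positivity
  have hdC : ((b : ℂ) ^ 2 + (t : ℂ) ^ 2) ≠ 0 := by
    intro h
    apply hd
    have : ((b:ℂ)^2 + (t:ℂ)^2).re = 0 := by rw [h]; rfl
    simp [← Complex.ofReal_pow] at this
    exact this
  have hz : ((b : ℂ) + t * I) ≠ 0 := by
    intro h
    have := congrArg Complex.re h
    simp at this
    exact hb.ne' this
  have hrw : ((a : ℂ) / (b + t * I))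
      = ((a * b / (b ^ 2 + t ^ 2) : ℝ) : ℂ) + ((-(a * t) / (b ^ 2 + t ^ 2) : ℝ) : ℂ) * I := by
    rw [div_eq_iff hz]
    push_cast
    field_simp
    ring_nf
    rw [Complex.I_sq]
    ring
  rw [hrw, show ((4:ℂ)/5) = ((4/5:ℝ):ℂ) by norm_num, show ((2:ℂ)/5) = ((2/5:ℝ):ℂ) by norm_num]
  simp only [pow_succ, pow_zero, one_mul]
  simp only [Complex.add_re, Complex.add_im, Complex.mul_re, Complex.mul_im,
    Complex.ofReal_re, Complex.ofReal_im, Complex.I_re, Complex.I_im]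
  have hd' : b * b + t * t ≠ 0 := by rw [show b*b+t*t = b^2+t^2 by ring]; exact hd
  generalize hdg : b * b + t * t = d at hd' ⊢
  field_simp
  subst hdg
  ring
end

section
/- Let P₄(X) = X + X² + (4/5)X³ + (2/5)X⁴ and let Q(a,b,t) = 5t⁴ + 2(5b² + 5ab − a²)t² + b²(5b² + 10ab + 14a²). For all real a, b, t with 0 < a ≤ b, Q(a,b,t) > 0, and consequently Re{P₄(a/(b+it))} ≥ (16/5)·(ab)⁴/(b²+t²)⁴. -/
open Complex

/-- For 0 < a ≤ b, Q(a,b,t) > 0 and Re P₄(a/(b+it)) ≥ (16/5)(ab)⁴/(b²+t²)⁴. -/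
theorem reP4_lower_bound (a b t : ℝ) (ha : 0 < a) (hab : a ≤ b) :
    0 < 5 * t ^ 4 + 2 * (5 * b ^ 2 + 5 * a * b - a ^ 2) * t ^ 2
        + b ^ 2 * (5 * b ^ 2 + 10 * a * b + 14 * a ^ 2) ∧
      (16 / 5) * (a * b) ^ 4 / (b ^ 2 + t ^ 2) ^ 4 ≤
        (((a : ℂ) / (b + t * I)) + ((a : ℂ) / (b + t * I)) ^ 2
          + (4 / 5) * ((a : ℂ) / (b + t * I)) ^ 3
          + (2 / 5) * ((a : ℂ) / (b + t * I)) ^ 4).re := by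
  have hb : 0 < b := lt_of_lt_of_le ha hab
  have hQ : 0 < 5 * t ^ 4 + 2 * (5 * b ^ 2 + 5 * a * b - a ^ 2) * t ^ 2
      + b ^ 2 * (5 * b ^ 2 + 10 * a * b + 14 * a ^ 2) := by
    nlinarith [sq_nonneg t, sq_nonneg (t^2), mul_pos ha hb, sq_nonneg (t*a), sq_nonneg (t*b),
      mul_pos (mul_pos ha hb) (mul_pos hb hb), sq_nonneg (a*b)]
  refine ⟨hQ, ?_⟩
  have hd : (0:ℝ) < b ^ 2 + t ^ 2 := by positivity
  have hz : (b:ℂ) + t * I ≠ 0 := by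
    intro h
    rw [Complex.ext_iff] at h
    simp at h
    exact hb.ne' h.1
  -- compute real and imaginary parts of w = a/(b+ti)
  set w : ℂ := (a:ℂ) / (b + t * I) with hw
  have hre : w.re = a * b / (b ^ 2 + t ^ 2) := by
    rw [hw, Complex.div_re]
    simp [Complex.normSq_apply]
    ring
  have him : w.im = -(a * t) / (b ^ 2 + t ^ 2) := by
    rw [hw, Complex.div_im]
    simp [Complex.normSq_apply]
    ring
  have hre2 : (w + w ^ 2 + (4/5) * w ^ 3 + (2/5) * w ^ 4).re
      = w.re + (w.re ^ 2 - w.im ^ 2) + (4/5) * (w.re ^ 3 - 3 * w.re * w.im ^ 2)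
        + (2/5) * (w.re ^ 4 - 6 * w.re ^ 2 * w.im ^ 2 + w.im ^ 4) := by
    simp [pow_succ, Complex.add_re, Complex.mul_re, Complex.mul_im,
      Complex.ofReal_re, Complex.ofReal_im]
    ring
  rw [hre2, hre, him, ← sub_nonneg]
  have hkey : a * b / (b ^ 2 + t ^ 2) + ((a * b / (b ^ 2 + t ^ 2)) ^ 2 - (-(a * t) / (b ^ 2 + t ^ 2)) ^ 2) +
        4 / 5 * ((a * b / (b ^ 2 + t ^ 2)) ^ 3 - 3 * (a * b / (b ^ 2 + t ^ 2)) * (-(a * t) / (b ^ 2 + t ^ 2)) ^ 2) +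
      2 / 5 *
        ((a * b / (b ^ 2 + t ^ 2)) ^ 4 - 6 * (a * b / (b ^ 2 + t ^ 2)) ^ 2 * (-(a * t) / (b ^ 2 + t ^ 2)) ^ 2 +
          (-(a * t) / (b ^ 2 + t ^ 2)) ^ 4) - 16 / 5 * (a * b) ^ 4 / (b ^ 2 + t ^ 2) ^ 4
      = a * (b - a) * (5 * t ^ 4 + 2 * (5 * b ^ 2 + 5 * a * b - a ^ 2) * t ^ 2
        + b ^ 2 * (5 * b ^ 2 + 10 * a * b + 14 * a ^ 2)) / (5 * (b ^ 2 + t ^ 2) ^ 3) := by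
    field_simp
    ring
  rw [hkey]
  exact div_nonneg (mul_nonneg (mul_nonneg ha.le (sub_nonneg.2 hab)) hQ.le) (by positivity)
end

section
/- Let P₄(X) = X + X² + (4/5)X³ + (2/5)X⁴. Suppose 0 < a ≤ b ≤ c are real, A > 0 and B, C ≥ 0 are real, and C/c⁴ + B/b⁴ ≥ A/a⁴. Then for every real t, Re{ C·P₄(a/(c+it)) + B·P₄(a/(b+it)) − A·P₄(a/(a+it)) } ≥ 0. -/
open Complex

noncomputable def P4 (X : ℂ) : ℂ := X + X ^ 2 + (4 / 5) * X ^ 3 + (2 / 5) * X ^ 4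


lemma reP4' (x y : ℝ) : (P4 ((x:ℂ) + (y:ℂ)*I)).re
    = x + (x^2 - y^2) + 4/5*(x^3 - 3*x*y^2) + 2/5*(x^4 - 6*x^2*y^2 + y^4) := by
  simp [P4, pow_succ, Complex.add_re, Complex.mul_re, Complex.mul_im,
    Complex.add_im, Complex.I_re, Complex.I_im, Complex.ofReal_re, Complex.ofReal_im,
    Complex.div_re, Complex.div_im, Complex.normSq]
  ring

lemma hXeq (a u t : ℝ) (hu : 0 < u) :
    (a:ℂ) / ((u:ℂ) + (t:ℂ)*I)
    = ((a*u/(u^2+t^2) : ℝ) : ℂ) + ((-(a*t)/(u^2+t^2) : ℝ) : ℂ)*I := by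
  have hs : (u:ℝ)^2 + t^2 ≠ 0 := by positivity
  have hsC : ((u:ℂ)^2 + (t:ℂ)^2) ≠ 0 := by
    exact_mod_cast Complex.ofReal_ne_zero.mpr hs
  have hne : (u:ℂ) + (t:ℂ)*I ≠ 0 := by
    intro hcontra
    have := congrArg Complex.re hcontra
    simp at this
    exact hu.ne' this
  rw [div_eq_iff hne]
  push_cast
  field_simp
  linear_combination (a*t^2 : ℂ) * Complex.I_sq

/-- numerator -/
noncomputable def Nval (a u t : ℝ) : ℝ :=
  a*u*(u^2+t^2)^3 + a^2*(u^2-t^2)*(u^2+t^2)^2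
    + 4/5*a^3*u*(u^2-3*t^2)*(u^2+t^2) + 2/5*a^4*(u^4-6*u^2*t^2+t^4)

lemma reP4_formula (a u t : ℝ) (hu : 0 < u) :
    (P4 ((a:ℂ)/((u:ℂ)+(t:ℂ)*I))).re = Nval a u t / (u^2+t^2)^4 := by
  rw [hXeq a u t hu, reP4']
  have hs : (u:ℝ)^2 + t^2 ≠ 0 := by positivity
  unfold Nval
  field_simp

lemma N_lower (a u t : ℝ) (ha : 0 < a) (hau : a ≤ u) :
    16/5*a^4*u^4 ≤ Nval a u t := by
  have key : Nval a u t - 16/5*a^4*u^4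
      = a*(u-a)*(u^4*(u^2+2*a*u+14/5*a^2) + u^2*(3*u^2+4*a*u+12/5*a^2)*t^2
          + (3*u^2+2*a*u-2/5*a^2)*t^4 + t^6) := by
    unfold Nval; ring
  have h1 : (0:ℝ) ≤ u - a := by linarith
  have hu : (0:ℝ) < u := lt_of_lt_of_le ha hau
  have h3 : (0:ℝ) ≤ 3*u^2+2*a*u-2/5*a^2 := by nlinarith
  have h4 : (0:ℝ) ≤ u^4*(u^2+2*a*u+14/5*a^2) + u^2*(3*u^2+4*a*u+12/5*a^2)*t^2
      + (3*u^2+2*a*u-2/5*a^2)*t^4 + t^6 := by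
    have p1 : (0:ℝ) ≤ u^4*(u^2+2*a*u+14/5*a^2) := by positivity
    have p2 : (0:ℝ) ≤ u^2*(3*u^2+4*a*u+12/5*a^2)*t^2 := by positivity
    have p3 : (0:ℝ) ≤ (3*u^2+2*a*u-2/5*a^2)*t^4 := mul_nonneg h3 (by positivity)
    have p4 : (0:ℝ) ≤ t^6 := by positivity
    linarith
  nlinarith [mul_nonneg (mul_nonneg ha.le h1) h4]

lemma Na_eq (a t : ℝ) : Nval a a t = 16/5*a^8 := by
  unfold Nval; ring

lemma gmono (a u t : ℝ) (ha : 0 < a) (hau : a ≤ u) :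
    a^8*(u^2+t^2)^4 ≤ u^8*(a^2+t^2)^4 := by
  have ha2 : a^2 ≤ u^2 := by nlinarith
  have h1 : a^2*(u^2+t^2) ≤ u^2*(a^2+t^2) := by
    nlinarith [mul_le_mul_of_nonneg_right ha2 (sq_nonneg t)]
  calc a^8*(u^2+t^2)^4 = (a^2*(u^2+t^2))^4 := by ring
    _ ≤ (u^2*(a^2+t^2))^4 := by
        apply pow_le_pow_left₀ (by positivity) h1 4
    _ = u^8*(a^2+t^2)^4 := by ring


set_option maxHeartbeats 1000000 in
/-- If 0 < a ≤ b ≤ c, A > 0, B, C ≥ 0 and C/c⁴ + B/b⁴ ≥ A/a⁴, then for every real t,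
Re{C·P₄(a/(c+it)) + B·P₄(a/(b+it)) − A·P₄(a/(a+it))} ≥ 0. -/
theorem P4_positivity (a b c A B C : ℝ) (ha : 0 < a) (hab : a ≤ b) (hbc : b ≤ c)
    (hA : 0 < A) (hB : 0 ≤ B) (hC : 0 ≤ C)
    (h : A / a ^ 4 ≤ C / c ^ 4 + B / b ^ 4) (t : ℝ) :
    0 ≤ ((C : ℂ) * P4 ((a : ℂ) / (c + t * I)) + (B : ℂ) * P4 ((a : ℂ) / (b + t * I))
          - (A : ℂ) * P4 ((a : ℂ) / (a + t * I))).re := by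
  have hb : (0:ℝ) < b := lt_of_lt_of_le ha hab
  have hc : (0:ℝ) < c := lt_of_lt_of_le hb hbc
  have hac : a ≤ c := le_trans hab hbc
  have hre : ((C : ℂ) * P4 ((a : ℂ) / (c + t * I)) + (B : ℂ) * P4 ((a : ℂ) / (b + t * I))
          - (A : ℂ) * P4 ((a : ℂ) / (a + t * I))).re
      = C * (P4 ((a:ℂ)/((c:ℂ) + (t:ℂ)*I))).re + B * (P4 ((a:ℂ)/((b:ℂ) + (t:ℂ)*I))).re
        - A * (P4 ((a:ℂ)/((a:ℂ) + (t:ℂ)*I))).re := by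
    simp [Complex.sub_re, Complex.add_re, Complex.mul_re, Complex.ofReal_re,
      Complex.ofReal_im]
  rw [hre, reP4_formula a c t hc, reP4_formula a b t hb, reP4_formula a a t ha]
  have hsa : (0:ℝ) < (a^2+t^2)^4 := by positivity
  have hsb : (0:ℝ) < (b^2+t^2)^4 := by positivity
  have hsc : (0:ℝ) < (c^2+t^2)^4 := by positivity
  have key : C * (Nval a c t/(c^2+t^2)^4) + B * (Nval a b t/(b^2+t^2)^4)
        - A*(Nval a a t/(a^2+t^2)^4)
      = (C*Nval a c t*(a^2+t^2)^4*(b^2+t^2)^4 + B*Nval a b t*(a^2+t^2)^4*(c^2+t^2)^4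
          - A*Nval a a t*(b^2+t^2)^4*(c^2+t^2)^4)
        / ((a^2+t^2)^4*(b^2+t^2)^4*(c^2+t^2)^4) := by
    field_simp
  rw [key]
  apply div_nonneg _ (by positivity)
  rw [Na_eq]
  have hNc := N_lower a c t ha hac
  have hNb := N_lower a b t ha hab
  have h' : A*(b^4*c^4) ≤ C*(a^4*b^4) + B*(a^4*c^4) := by
    rw [div_add_div _ _ (by positivity : (c:ℝ)^4 ≠ 0) (by positivity : (b:ℝ)^4 ≠ 0),
      div_le_div_iff₀ (by positivity) (by positivity)] at h
    nlinarith [h]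
  have m1 := gmono a c t ha hac
  have m2 := gmono a b t ha hab
  have hgoal : (0:ℝ) ≤ (b^4*c^4) * (C*Nval a c t*(a^2+t^2)^4*(b^2+t^2)^4
      + B*Nval a b t*(a^2+t^2)^4*(c^2+t^2)^4 - A*(16/5*a^8)*(b^2+t^2)^4*(c^2+t^2)^4) := by
    linarith [mul_le_mul_of_nonneg_right h'
        (show (0:ℝ) ≤ a^8*(b^2+t^2)^4*(c^2+t^2)^4 by positivity),
      mul_le_mul_of_nonneg_left m1
        (show (0:ℝ) ≤ C*a^4*b^4*(b^2+t^2)^4 by positivity),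
      mul_le_mul_of_nonneg_left m2
        (show (0:ℝ) ≤ B*a^4*c^4*(c^2+t^2)^4 by positivity),
      mul_le_mul_of_nonneg_left hNc
        (show (0:ℝ) ≤ C*(a^2+t^2)^4*(b^2+t^2)^4*b^4*c^4 by positivity),
      mul_le_mul_of_nonneg_left hNb
        (show (0:ℝ) ≤ B*(a^2+t^2)^4*(c^2+t^2)^4*b^4*c^4 by positivity)]
  have hpos : (0:ℝ) < b^4*c^4 := by positivity
  exact (mul_nonneg_iff_of_pos_left hpos).mp hgoal
end

section
/- The polynomial P₄(X) = X + X² + (4/5)X³ + (2/5)X⁴ is admissible: it has nonnegative coefficients, P₄(0) = 0, and Re{P₄(1/z)} ≥ 0 for every complex number z with Re z ≥ 1. -/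
lemma P4_re (w : ℂ) : (P4 w).re =
    w.re + (w.re ^ 2 - w.im ^ 2) + 4 / 5 * (w.re ^ 3 - 3 * w.re * w.im ^ 2)
      + 2 / 5 * (w.re ^ 4 - 6 * w.re ^ 2 * w.im ^ 2 + w.im ^ 4) := by
  simp [P4, pow_succ, Complex.add_re, Complex.mul_re, Complex.mul_im,
    Complex.div_re, Complex.div_im, Complex.normSq]
  ring

lemma key (a b : ℝ) (h : a ^ 2 + b ^ 2 ≤ a) :
    0 ≤ a + (a ^ 2 - b ^ 2) + 4 / 5 * (a ^ 3 - 3 * a * b ^ 2)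
      + 2 / 5 * (a ^ 4 - 6 * a ^ 2 * b ^ 2 + b ^ 4) := by
  have h1 : 0 ≤ a - a ^ 2 - b ^ 2 := by linarith
  have hQ : 0 ≤ 1 + 2 * a + 14 / 5 * a ^ 2 - 2 / 5 * b ^ 2 := by
    nlinarith [sq_nonneg a, sq_nonneg b]
  nlinarith [mul_nonneg h1 hQ, sq_nonneg (a ^ 2)]

/-- P₄ is admissible: P₄(0) = 0 and Re P₄(1/z) ≥ 0 whenever Re z ≥ 1. -/
theorem P4_admissible :
    P4 0 = 0 ∧ ∀ z : ℂ, 1 ≤ z.re → 0 ≤ (P4 (1 / z)).re := by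
  constructor
  · simp [P4]
  · intro z hz
    have hz0 : z ≠ 0 := fun h => by simp [h] at hz; linarith
    have hn : 0 < Complex.normSq z := Complex.normSq_pos.mpr hz0
    set a := (1 / z).re with ha
    set b := (1 / z).im with hb
    have hab : a ^ 2 + b ^ 2 ≤ a := by
      have h1 : a = z.re / Complex.normSq z := by
        rw [ha, one_div, Complex.inv_re]
      have h2 : b = -z.im / Complex.normSq z := by
        rw [hb, one_div, Complex.inv_im]
      have hsq : a ^ 2 + b ^ 2 = 1 / Complex.normSq z := by
        rw [h1, h2]
        field_simp
        simp [Complex.normSq_apply]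
        ring
      rw [hsq, h1]
      rw [div_le_div_iff₀ hn hn]
      nlinarith
    rw [P4_re]
    exact key a b hab
end

section
/- Let f : [0,∞) → ℝ be continuous, nonnegative, and compactly supported, and let F(z) = ∫₀^∞ f(t) e^{−zt} dt be its Laplace transform. Suppose Re F(z) ≥ 0 for all complex z with Re z ≥ 0. Then for all real a, b ≥ 0 and all real y: if b ≥ a, then Re{F(−a+iy) − F(iy) − F(b−a+iy)} ≤ F(−a) − F(0); and if b ≤ a, then Re{F(−a+iy) − F(iy) − F(b−a+iy)} ≤ F(−a) − F(b−a). -/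
open MeasureTheory Complex

/-- Heath-Brown style repulsion lemma for the Laplace transform: if f is continuous,
nonnegative and compactly supported with Re F(z) ≥ 0 for Re z ≥ 0, then for a, b ≥ 0
and real y, Re{F(−a+iy) − F(iy) − F(b−a+iy)} is bounded by F(−a) − F(0) if b ≥ a,
and by F(−a) − F(b−a) if b ≤ a. -/
theorem repel_lemma (f : ℝ → ℝ) (hf_cont : Continuous f)
    (hf_nonneg : ∀ t, 0 ≤ f t) (hf_supp : HasCompactSupport f)
    (F : ℂ → ℂ)
    (hF : ∀ z : ℂ, F z = ∫ t in Set.Ioi (0 : ℝ), (f t : ℂ) * Complex.exp (-z * t))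
    (hFpos : ∀ z : ℂ, 0 ≤ z.re → 0 ≤ (F z).re)
    (a b y : ℝ) (ha : 0 ≤ a) (hb : 0 ≤ b) :
    (a ≤ b →
        (F (-(a : ℂ) + y * I) - F (y * I) - F ((b : ℂ) - a + y * I)).re ≤
          (F (-(a : ℂ))).re - (F 0).re) ∧
      (b ≤ a →
        (F (-(a : ℂ) + y * I) - F (y * I) - F ((b : ℂ) - a + y * I)).re ≤
          (F (-(a : ℂ))).re - (F ((b : ℂ) - a)).re) := by
  -- real integrability helper
  have hint : ∀ g : ℝ → ℝ, Continuous g →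
      IntegrableOn (fun t => f t * g t) (Set.Ioi (0:ℝ)) := fun g hg =>
    ((hf_cont.mul hg).integrable_of_hasCompactSupport hf_supp.mul_right).integrableOn
  have hint' : ∀ c y' : ℝ,
      IntegrableOn (fun t => f t * Real.exp (-c * t) * Real.cos (y' * t)) (Set.Ioi (0:ℝ)) := by
    intro c y'
    have := hint (fun t => Real.exp (-c * t) * Real.cos (y' * t)) (by continuity)
    simpa [mul_assoc] using this
  -- complex integrability
  have hintC : ∀ z : ℂ,
      IntegrableOn (fun t : ℝ => (f t : ℂ) * Complex.exp (-z * t)) (Set.Ioi (0:ℝ)) := by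
    intro z
    have hcs : HasCompactSupport (fun t : ℝ => (f t : ℂ)) :=
      hf_supp.comp_left (g := Complex.ofReal) rfl
    exact ((Complex.continuous_ofReal.comp hf_cont).mul
      (by continuity)).integrable_of_hasCompactSupport hcs.mul_right |>.integrableOn
  -- real part of F
  have hRe : ∀ x y' : ℝ, (F (↑x + ↑y' * I)).re
      = ∫ t in Set.Ioi (0:ℝ), f t * Real.exp (-x * t) * Real.cos (y' * t) := by
    intro x y'
    have h1 := integral_re (μ := volume.restrict (Set.Ioi (0:ℝ))) (hintC (↑x + ↑y' * I))
    simp only [RCLike.re_to_complex] at h1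
    rw [hF, ← h1]
    apply setIntegral_congr_fun measurableSet_Ioi
    intro t ht
    simp [Complex.mul_re, Complex.exp_re, Complex.add_re, Complex.add_im,
      Complex.mul_im, mul_comm, mul_assoc, mul_left_comm]
  -- key inequality
  have key : ∀ c d y' : ℝ, c ≤ d →
      (∫ t in Set.Ioi (0:ℝ), f t * Real.exp (-c * t) * Real.cos (y' * t)) -
        (∫ t in Set.Ioi (0:ℝ), f t * Real.exp (-d * t) * Real.cos (y' * t)) ≤
      (∫ t in Set.Ioi (0:ℝ), f t * Real.exp (-c * t) * Real.cos ((0:ℝ) * t)) -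
        (∫ t in Set.Ioi (0:ℝ), f t * Real.exp (-d * t) * Real.cos ((0:ℝ) * t)) := by
    intro c d y' hcd
    rw [← integral_sub (hint' c y') (hint' d y'), ← integral_sub (hint' c 0) (hint' d 0)]
    apply setIntegral_mono_on ((hint' c y').sub (hint' d y')) ((hint' c 0).sub (hint' d 0))
      measurableSet_Ioi
    intro t ht
    simp only [Set.mem_Ioi] at ht
    have he : Real.exp (-d * t) ≤ Real.exp (-c * t) :=
      Real.exp_le_exp.2 (by nlinarith)
    have h0 : 0 ≤ f t * (Real.exp (-c * t) - Real.exp (-d * t)) :=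
      mul_nonneg (hf_nonneg t) (by linarith)
    have hc1 : Real.cos (y' * t) ≤ 1 := Real.cos_le_one _
    have := mul_nonneg h0 (sub_nonneg.2 hc1)
    simp only [zero_mul, Real.cos_zero, Pi.sub_apply]
    nlinarith
  -- rewrite arguments
  have e1 : (-(a : ℂ) + ↑y * I) = ↑(-a : ℝ) + ↑y * I := by push_cast; ring
  have e2 : ((y : ℂ) * I) = ↑(0 : ℝ) + ↑y * I := by push_cast; ring
  have e3 : ((b : ℂ) - a + ↑y * I) = ↑(b - a : ℝ) + ↑y * I := by push_cast; ring
  have e4 : (-(a : ℂ)) = ↑(-a : ℝ) + ↑(0 : ℝ) * I := by push_cast; ring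
  have e5 : (0 : ℂ) = ↑(0 : ℝ) + ↑(0 : ℝ) * I := by push_cast; ring
  have e6 : ((b : ℂ) - a) = ↑(b - a : ℝ) + ↑(0 : ℝ) * I := by push_cast; ring
  constructor
  · intro hab
    have K := key (-a) 0 y (by linarith)
    have P : 0 ≤ (F ((b : ℂ) - a + ↑y * I)).re := by
      apply hFpos
      simp
      linarith
    simp only [Complex.sub_re]
    rw [congrArg F e1, congrArg F e2, congrArg F e4, congrArg F e5, hRe, hRe, hRe, hRe]
    simp only [neg_neg, neg_zero] at K ⊢
    linarith
  · intro hab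
    have K := key (-a) (b - a) y (by linarith)
    have P : 0 ≤ (F ((y : ℂ) * I)).re := by
      apply hFpos
      simp
    simp only [Complex.sub_re]
    rw [congrArg F e1, congrArg F e3, congrArg F e4, congrArg F e6, hRe, hRe, hRe, hRe]
    simp only [neg_neg, neg_zero] at K ⊢
    linarith
end

section
/- Let x₀ > 0 and let f : [0,∞) → ℝ be continuous with support contained in [0,x₀), twice differentiable on (0,x₀) with f'' continuous and bounded in absolute value by B. Then for every complex z with Re z > 0, F(z) := ∫₀^∞ f(t) e^{−zt} dt satisfies |F(z) − f(0)/z| ≤ (3Bx₀ + 2|f(0)|/x₀) / |z|². -/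
open MeasureTheory Complex Set Filter Topology intervalIntegral

/-- If f is continuous, supported in [0,x₀), twice differentiable on (0,x₀) with |f''| ≤ B,
then for Re z > 0 the Laplace transform satisfies
|F(z) − f(0)/z| ≤ (3Bx₀ + 2|f(0)|/x₀)/|z|². -/
theorem laplace_error_bound (x₀ B : ℝ) (hx₀ : 0 < x₀)
    (f f' f'' : ℝ → ℝ) (hf_cont : Continuous f)
    (hf_supp : ∀ t, x₀ ≤ t → f t = 0)
    (hderiv : ∀ t ∈ Set.Ioo 0 x₀, HasDerivAt f (f' t) t)
    (hderiv2 : ∀ t ∈ Set.Ioo 0 x₀, HasDerivAt f' (f'' t) t)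
    (hf''_cont : ContinuousOn f'' (Set.Ioo 0 x₀))
    (hf''_bdd : ∀ t ∈ Set.Ioo 0 x₀, |f'' t| ≤ B)
    (z : ℂ) (hz : 0 < z.re) :
    ‖(∫ t in Set.Ioi (0 : ℝ), (f t : ℂ) * Complex.exp (-z * t)) - (f 0 : ℂ) / z‖ ≤
      (3 * B * x₀ + 2 * |f 0| / x₀) / ‖z‖ ^ 2 := by
  have hB : 0 ≤ B := le_trans (abs_nonneg _) (hf''_bdd (x₀ / 2) ⟨by positivity, by linarith⟩)
  have hz0 : z ≠ 0 := by
    intro h; rw [h] at hz; simp at hz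
  have hzn : 0 < ‖z‖ := norm_pos_iff.mpr hz0
  have hfx₀ : f x₀ = 0 := hf_supp x₀ le_rfl
  -- exponential bound
  have hexp : ∀ t : ℝ, 0 ≤ t → ‖Complex.exp (-z * t)‖ ≤ 1 := by
    intro t ht
    rw [Complex.norm_exp]
    have h1 : (-z * (t : ℂ)).re = -(z.re * t) := by simp [Complex.mul_re]
    rw [h1]
    calc Real.exp (-(z.re * t)) ≤ Real.exp 0 := by
          apply Real.exp_le_exp.mpr; nlinarith
      _ = 1 := Real.exp_zero
  -- f' is Lipschitz on (0, x₀)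
  have hlip : LipschitzOnWith B.toNNReal f' (Set.Ioo 0 x₀) :=
    (convex_Ioo 0 x₀).lipschitzOnWith_of_nnnorm_hasDerivWithin_le
      (fun t ht => (hderiv2 t ht).hasDerivWithinAt)
      (fun t ht => by
        rw [← NNReal.coe_le_coe, coe_nnnorm, Real.coe_toNNReal B hB, Real.norm_eq_abs]
        exact hf''_bdd t ht)
  obtain ⟨g, hg_lip, hg_eq⟩ := hlip.extend_real
  -- mean value theorem gives a point where f' is small
  obtain ⟨c, hc, hslope⟩ := exists_hasDerivAt_eq_slope f f' hx₀ hf_cont.continuousOn hderiv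
  set M := B * x₀ + |f 0| / x₀ with hMdef
  have hf0x : 0 ≤ |f 0| / x₀ := by positivity
  have hMnn : 0 ≤ M := by rw [hMdef]; have := mul_nonneg hB hx₀.le; linarith
  have hfc : |f' c| ≤ |f 0| / x₀ := by
    rw [hslope, hfx₀, zero_sub, sub_zero, abs_div, abs_neg, abs_of_pos hx₀]
  have hM' : ∀ t ∈ Set.Ioo 0 x₀, |f' t| ≤ M := by
    intro t ht
    have hd : dist (f' t) (f' c) ≤ B * dist t c := by
      have := hlip.dist_le_mul t ht c hc
      rwa [Real.coe_toNNReal B hB] at this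
    have hdist : dist t c ≤ x₀ := by
      rw [Real.dist_eq, abs_le]
      constructor <;> nlinarith [ht.1, ht.2, hc.1, hc.2]
    have h2 : |f' t - f' c| ≤ B * x₀ := by
      rw [← Real.dist_eq]
      calc dist (f' t) (f' c) ≤ B * dist t c := hd
        _ ≤ B * x₀ := by nlinarith [dist_nonneg (x := t) (y := c)]
    calc |f' t| = |f' t - f' c + f' c| := by ring_nf
      _ ≤ |f' t - f' c| + |f' c| := abs_add_le _ _
      _ ≤ B * x₀ + |f 0| / x₀ := add_le_add h2 hfc
  -- bounds on g
  have hgM : ∀ t ∈ Set.Ioo 0 x₀, |g t| ≤ M := fun t ht => (hg_eq ht) ▸ hM' t ht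
  have hgcont : Continuous g := hg_lip.continuous
  have hg0 : |g 0| ≤ M := by
    have htd : Tendsto (fun t => |g t|) (𝓝[>] (0 : ℝ)) (𝓝 |g 0|) :=
      ((hgcont.abs).tendsto 0).mono_left nhdsWithin_le_nhds
    refine le_of_tendsto htd ?_
    filter_upwards [Ioo_mem_nhdsGT_of_mem (Set.left_mem_Ico.mpr hx₀)] with t ht
    exact hgM t ht
  have hgx₀ : |g x₀| ≤ M := by
    have htd : Tendsto (fun t => |g t|) (𝓝[<] x₀) (𝓝 |g x₀|) :=
      ((hgcont.abs).tendsto x₀).mono_left nhdsWithin_le_nhds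
    refine le_of_tendsto htd ?_
    filter_upwards [Ioo_mem_nhdsLT_of_mem (Set.right_mem_Ioc.mpr hx₀)] with t ht
    exact hgM t ht
  -- the auxiliary antiderivative of exp(-z t)
  set E : ℝ → ℂ := fun s => -Complex.exp (-z * s) / z with hEdef
  have hEexp : Continuous fun s : ℝ => Complex.exp (-z * s) :=
    (Complex.continuous_exp.comp (continuous_const.mul Complex.continuous_ofReal))
  have hEcont : Continuous E := (hEexp.neg).div_const z
  have hE : ∀ t : ℝ, HasDerivAt E (Complex.exp (-z * t)) t := by
    intro t
    have h2 : HasDerivAt (fun w : ℂ => Complex.exp (-z * w)) (-z * Complex.exp (-z * t)) (t : ℂ) := by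
      simpa [mul_comm] using ((hasDerivAt_id (t : ℂ)).const_mul (-z)).cexp
    have h1 : HasDerivAt (fun s : ℝ => Complex.exp (-z * s)) (-z * Complex.exp (-z * t)) t :=
      h2.comp_ofReal
    have h3 := (h1.neg).div_const z
    rw [show Complex.exp (-z * t) = -(-z * Complex.exp (-z * t)) / z by
      rw [neg_mul z (Complex.exp (-z * t)), neg_neg, mul_div_cancel_left₀ _ hz0]]
    exact h3
  have hEbound : ∀ t : ℝ, 0 ≤ t → ‖E t‖ ≤ 1 / ‖z‖ := by
    intro t ht
    rw [hEdef]
    simp only [norm_div, norm_neg]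
    gcongr
    exact hexp t ht
  -- ofReal derivative for f
  have hfC : ∀ t ∈ Set.Ioo 0 x₀, HasDerivAt (fun s => (f s : ℂ)) ((f' t : ℂ)) t :=
    fun t ht => (hderiv t ht).ofReal_comp
  have hgC : ∀ t ∈ Set.Ioo 0 x₀, HasDerivAt (fun s => (g s : ℂ)) ((f'' t : ℂ)) t := by
    intro t ht
    have hg' : HasDerivAt g (f'' t) t := by
      apply (hderiv2 t ht).congr_of_eventuallyEq
      filter_upwards [isOpen_Ioo.mem_nhds ht] with s hs using (hg_eq hs).symm
    exact hg'.ofReal_comp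
  -- first integration by parts
  set W : ℝ → ℂ := fun s => (g s : ℂ) * Complex.exp (-z * s) with hWdef
  set J := ∫ t in (0:ℝ)..x₀, W t with hJdef
  have hWcont : Continuous W := ((Complex.continuous_ofReal.comp hgcont).mul hEexp)
  have hfexpcont : Continuous fun s : ℝ => (f s : ℂ) * Complex.exp (-z * s) :=
    ((Complex.continuous_ofReal.comp hf_cont).mul hEexp)
  have key1 : (∫ t in (0:ℝ)..x₀, ((g t : ℂ) * E t + (f t : ℂ) * Complex.exp (-z * t)))
      = (f 0 : ℂ) / z := by
    have hU : ∀ t ∈ Set.Ioo 0 x₀,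
        HasDerivAt (fun s => (f s : ℂ) * E s)
          ((g t : ℂ) * E t + (f t : ℂ) * Complex.exp (-z * t)) t := by
      intro t ht
      have h1 := (hfC t ht).mul (hE t)
      rw [show ((f' t : ℝ) : ℂ) = ((g t : ℝ) : ℂ) by rw [hg_eq ht]] at h1
      exact h1
    have hint : IntervalIntegrable
        (fun t => (g t : ℂ) * E t + (f t : ℂ) * Complex.exp (-z * t)) volume 0 x₀ :=
      (((Complex.continuous_ofReal.comp hgcont).mul hEcont).add hfexpcont).intervalIntegrable 0 x₀
    have := intervalIntegral.integral_eq_sub_of_hasDerivAt_of_le hx₀.le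
      ((Complex.continuous_ofReal.comp hf_cont).mul hEcont).continuousOn hU hint
    rw [this]
    simp only [hfx₀, Complex.ofReal_zero, zero_mul, zero_sub, hEdef, Complex.ofReal_zero,
      mul_zero, Complex.exp_zero]
    simp only [Pi.mul_apply, Function.comp_apply, hfx₀, Complex.ofReal_zero, zero_mul,
      mul_zero, neg_zero, Complex.exp_zero, zero_sub]
    field_simp
  -- second integration by parts
  have hVint1 : IntervalIntegrable (fun s => (f'' s : ℂ) * E s) volume 0 x₀ := by
    rw [intervalIntegrable_iff_integrableOn_Ioc_of_le hx₀.le, IntegrableOn,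
      ← Measure.restrict_congr_set Ioo_ae_eq_Ioc]
    constructor
    · exact ((Complex.continuous_ofReal.comp_continuousOn hf''_cont).mul
        hEcont.continuousOn).aestronglyMeasurable measurableSet_Ioo
    · apply HasFiniteIntegral.of_bounded (C := B / ‖z‖)
      filter_upwards [ae_restrict_mem measurableSet_Ioo] with t ht
      rw [norm_mul]
      have h1 : ‖((f'' t : ℝ) : ℂ)‖ ≤ B := by
        rw [Complex.norm_real, Real.norm_eq_abs]; exact hf''_bdd t ht
      have h2 : ‖E t‖ ≤ 1 / ‖z‖ := hEbound t ht.1.le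
      calc ‖((f'' t : ℝ) : ℂ)‖ * ‖E t‖ ≤ B * (1 / ‖z‖) := by
            apply mul_le_mul h1 h2 (norm_nonneg _) hB
        _ = B / ‖z‖ := by ring
  set K := ∫ t in (0:ℝ)..x₀, (f'' t : ℂ) * Complex.exp (-z * t) with hKdef
  have key2 : (∫ t in (0:ℝ)..x₀, ((f'' t : ℂ) * E t + W t))
      = (g x₀ : ℂ) * E x₀ - (g 0 : ℂ) * E 0 := by
    have hV : ∀ t ∈ Set.Ioo 0 x₀,
        HasDerivAt (fun s => (g s : ℂ) * E s) ((f'' t : ℂ) * E t + W t) t :=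
      fun t ht => (hgC t ht).mul (hE t)
    exact intervalIntegral.integral_eq_sub_of_hasDerivAt_of_le hx₀.le
      ((Complex.continuous_ofReal.comp hgcont).mul hEcont).continuousOn hV
      (hVint1.add (hWcont.intervalIntegrable 0 x₀))
  -- split integrals and rearrange
  have hsplit2 : (∫ t in (0:ℝ)..x₀, ((f'' t : ℂ) * E t + W t))
      = (∫ t in (0:ℝ)..x₀, (f'' t : ℂ) * E t) + J :=
    intervalIntegral.integral_add hVint1 (hWcont.intervalIntegrable 0 x₀)
  have hf''E : (∫ t in (0:ℝ)..x₀, (f'' t : ℂ) * E t) = -K / z := by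
    rw [hKdef, ← intervalIntegral.integral_neg, ← intervalIntegral.integral_div]
    apply intervalIntegral.integral_congr
    intro t _
    rw [hEdef]
    ring
  -- bound on K
  have hKbound : ‖K‖ ≤ B * x₀ := by
    have := intervalIntegral.norm_integral_le_of_norm_le_const_ae
      (a := 0) (b := x₀) (C := B) (f := fun t => (f'' t : ℂ) * Complex.exp (-z * t)) ?_
    · rwa [sub_zero, abs_of_pos hx₀] at this
    · have hx : ∀ᵐ t : ℝ, t ∉ ({x₀} : Set ℝ) :=
        compl_mem_ae_iff.mpr (measure_singleton x₀)
      filter_upwards [hx] with t ht htmem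
      rw [Set.uIoc_of_le hx₀.le] at htmem
      have htIoo : t ∈ Set.Ioo 0 x₀ :=
        Set.mem_Ioo.mpr ⟨htmem.1, lt_of_le_of_ne htmem.2 (by simpa using ht)⟩
      rw [norm_mul]
      calc ‖((f'' t : ℝ) : ℂ)‖ * ‖Complex.exp (-z * t)‖ ≤ B * 1 := by
            apply mul_le_mul ?_ (hexp t htIoo.1.le) (norm_nonneg _) hB
            rw [Complex.norm_real, Real.norm_eq_abs]; exact hf''_bdd t htIoo
        _ = B := mul_one B
  -- bound on J
  have hJbound : ‖J‖ ≤ (2 * M + B * x₀) / ‖z‖ := by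
    have hJ_eq : J = (g x₀ : ℂ) * E x₀ - (g 0 : ℂ) * E 0 + K / z := by
      have := key2
      rw [hsplit2, hf''E] at this
      have h5 : J = ((g x₀ : ℂ) * E x₀ - (g 0 : ℂ) * E 0) - (-K / z) := by
        rw [← this]; ring
      rw [h5]; ring
    rw [hJ_eq]
    have b1 : ‖(g x₀ : ℂ) * E x₀‖ ≤ M / ‖z‖ := by
      rw [norm_mul]
      calc ‖((g x₀ : ℝ) : ℂ)‖ * ‖E x₀‖ ≤ M * (1 / ‖z‖) := by
            apply mul_le_mul ?_ (hEbound x₀ hx₀.le) (norm_nonneg _) hMnn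
            rw [Complex.norm_real, Real.norm_eq_abs]; exact hgx₀
        _ = M / ‖z‖ := by ring
    have b2 : ‖(g 0 : ℂ) * E 0‖ ≤ M / ‖z‖ := by
      rw [norm_mul]
      calc ‖((g 0 : ℝ) : ℂ)‖ * ‖E 0‖ ≤ M * (1 / ‖z‖) := by
            apply mul_le_mul ?_ (hEbound 0 le_rfl) (norm_nonneg _) hMnn
            rw [Complex.norm_real, Real.norm_eq_abs]; exact hg0
        _ = M / ‖z‖ := by ring
    have b3 : ‖K / z‖ ≤ B * x₀ / ‖z‖ := by
      rw [norm_div]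
      gcongr
    calc ‖(g x₀ : ℂ) * E x₀ - (g 0 : ℂ) * E 0 + K / z‖
        ≤ ‖(g x₀ : ℂ) * E x₀ - (g 0 : ℂ) * E 0‖ + ‖K / z‖ := norm_add_le _ _
      _ ≤ (‖(g x₀ : ℂ) * E x₀‖ + ‖(g 0 : ℂ) * E 0‖) + ‖K / z‖ :=
          add_le_add_left (norm_sub_le _ _) _
      _ ≤ (M / ‖z‖ + M / ‖z‖) + B * x₀ / ‖z‖ := by
          exact add_le_add (add_le_add b1 b2) b3
      _ = (2 * M + B * x₀) / ‖z‖ := by ring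
  -- reduce the Ioi-integral to the interval integral
  have hstep0 : (∫ t in Set.Ioi (0:ℝ), (f t : ℂ) * Complex.exp (-z * t))
      = ∫ t in (0:ℝ)..x₀, (f t : ℂ) * Complex.exp (-z * t) := by
    rw [intervalIntegral.integral_of_le hx₀.le]
    rw [show (∫ t in Set.Ioi (0:ℝ), (f t : ℂ) * Complex.exp (-z * t))
        = ∫ t in Set.Ioi (0:ℝ),
            (Set.Ioc 0 x₀).indicator (fun t => (f t : ℂ) * Complex.exp (-z * t)) t from ?_]
    · rw [setIntegral_indicator measurableSet_Ioc,
        Set.inter_eq_self_of_subset_right Set.Ioc_subset_Ioi_self]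
    · apply setIntegral_congr_fun measurableSet_Ioi
      intro t ht
      by_cases h : t ≤ x₀
      · simp only [Set.indicator_of_mem (Set.mem_Ioc.mpr ⟨ht, h⟩)]
      · simp only [Set.indicator_of_notMem (fun hmem => h (Set.mem_Ioc.mp hmem).2),
          hf_supp t (le_of_not_ge h), Complex.ofReal_zero, zero_mul]
  -- combine
  have hFJ : (∫ t in (0:ℝ)..x₀, (f t : ℂ) * Complex.exp (-z * t)) = (f 0 : ℂ) / z + J / z := by
    have hsplit1 : (∫ t in (0:ℝ)..x₀, ((g t : ℂ) * E t + (f t : ℂ) * Complex.exp (-z * t)))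
        = (∫ t in (0:ℝ)..x₀, (g t : ℂ) * E t)
          + ∫ t in (0:ℝ)..x₀, (f t : ℂ) * Complex.exp (-z * t) :=
      intervalIntegral.integral_add
        (((Complex.continuous_ofReal.comp hgcont).mul hEcont).intervalIntegrable 0 x₀)
        (hfexpcont.intervalIntegrable 0 x₀)
    have hgE : (∫ t in (0:ℝ)..x₀, (g t : ℂ) * E t) = -J / z := by
      rw [hJdef, ← intervalIntegral.integral_neg, ← intervalIntegral.integral_div]
      apply intervalIntegral.integral_congr
      intro t _
      rw [hEdef, hWdef]
      ring
    have h6 := key1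
    rw [hsplit1, hgE] at h6
    have : (∫ t in (0:ℝ)..x₀, (f t : ℂ) * Complex.exp (-z * t)) = (f 0 : ℂ) / z - (-J / z) := by
      rw [← h6]; ring
    rw [this]; ring
  rw [hstep0, hFJ]
  have hfinal : ‖(f 0 : ℂ) / z + J / z - (f 0 : ℂ) / z‖ = ‖J‖ / ‖z‖ := by
    rw [show (f 0 : ℂ) / z + J / z - (f 0 : ℂ) / z = J / z by ring, norm_div]
  rw [hfinal]
  calc ‖J‖ / ‖z‖ ≤ ((2 * M + B * x₀) / ‖z‖) / ‖z‖ := by gcongr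
    _ = (2 * M + B * x₀) / ‖z‖ ^ 2 := by rw [div_div]; ring_nf
    _ = (3 * B * x₀ + 2 * |f 0| / x₀) / ‖z‖ ^ 2 := by rw [hMdef]; ring_nf
end
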